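/- arXiv:2205.14431 — 3 statements merged into one kernel-verified Lean document; each statement's English description precedes it below -/
import Mathlib

section
/- Let N > 1 be an integer, α > 0, and b = 0. For every fixed r₀ > 0, the derivative of the translating profile at r₀ tends to infinity as the speed tends to infinity: Φ'(r₀; c, 0) → ∞ as c → ∞. -/
open Set Filter Topology

/-- Signed power: the usual real power for nonnegative arguments, extended oddly
to negative arguments (matching `x^{e}` for `1/e = p/q` with `p, q` odd). -/
noncomputable def oddPow (x e : ℝ) : ℝ := if 0 ≤ x then x ^ e else -((-x) ^ e)

/-- `φ`, with first derivative `φ'` and second derivative `φ''`, solves the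
translating-profile equation
`φ''/(1+φ'²) + ((N−1)/r)·φ' = (c/√(1+φ'²) − b)^{1/α}·√(1+φ'²)` for `r ∈ J`, `r ≠ 0`,
with the initial conditions `φ(0) = φ'(0) = 0`. -/
def IsProfileSolOn (N : ℕ) (α b c : ℝ) (J : Set ℝ) (φ φ' φ'' : ℝ → ℝ) : Prop :=
  φ 0 = 0 ∧ φ' 0 = 0 ∧
  (∀ r ∈ J, HasDerivWithinAt φ (φ' r) J r) ∧
  (∀ r ∈ J, HasDerivWithinAt φ' (φ'' r) J r) ∧
  (∀ r ∈ J, r ≠ 0 →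
    φ'' r / (1 + φ' r ^ 2) + (((N : ℝ) - 1) / r) * φ' r
      = oddPow (c / Real.sqrt (1 + φ' r ^ 2) - b) (1 / α) * Real.sqrt (1 + φ' r ^ 2))

/-- `φ` is the unique solution of the translating-profile problem, defined on its
maximal existence interval `[0, R)`: it is a solution there, and any solution on any
interval `[0, S)` satisfies `S ≤ R` and coincides with `φ` on `[0, S)`. -/
def IsMaxProfileSol (N : ℕ) (α b c R : ℝ) (φ φ' φ'' : ℝ → ℝ) : Prop :=
  0 < R ∧ IsProfileSolOn N α b c (Set.Ico 0 R) φ φ' φ'' ∧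
  ∀ S ψ ψ' ψ'', 0 < S → IsProfileSolOn N α b c (Set.Ico 0 S) ψ ψ' ψ'' →
    S ≤ R ∧ Set.EqOn ψ φ (Set.Ico 0 S)

lemma ratio_mono {a b : ℝ} (ha : 0 ≤ a) (hab : a ≤ b) :
    a / Real.sqrt (1 + a ^ 2) ≤ b / Real.sqrt (1 + b ^ 2) := by
  have hb : 0 ≤ b := ha.trans hab
  have h1 : (0:ℝ) < 1 + a ^ 2 := by positivity
  have h2 : (0:ℝ) < 1 + b ^ 2 := by positivity
  rw [div_le_div_iff₀ (Real.sqrt_pos.2 h1) (Real.sqrt_pos.2 h2)]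
  have e1 : a * Real.sqrt (1 + b ^ 2) = Real.sqrt (a ^ 2 * (1 + b ^ 2)) := by
    rw [Real.sqrt_mul (sq_nonneg a), Real.sqrt_sq ha]
  have e2 : b * Real.sqrt (1 + a ^ 2) = Real.sqrt (b ^ 2 * (1 + a ^ 2)) := by
    rw [Real.sqrt_mul (sq_nonneg b), Real.sqrt_sq hb]
  rw [e1, e2]
  exact Real.sqrt_le_sqrt (by nlinarith)

lemma from_ratio {a w : ℝ} (ha : 0 ≤ a) (hw : 0 ≤ w) (hw1 : w < 1)
    (h : a / Real.sqrt (1 + a ^ 2) ≤ w) : a ≤ w / Real.sqrt (1 - w ^ 2) := by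
  have h1 : (0:ℝ) < 1 + a ^ 2 := by positivity
  have hs : 0 < Real.sqrt (1 + a ^ 2) := Real.sqrt_pos.2 h1
  have h2 : a ≤ w * Real.sqrt (1 + a ^ 2) := (div_le_iff₀ hs).1 h
  have hss : Real.sqrt (1 + a ^ 2) ^ 2 = 1 + a ^ 2 := Real.sq_sqrt h1.le
  have h3 : a ^ 2 ≤ w ^ 2 * (1 + a ^ 2) := by nlinarith
  have h4 : (0:ℝ) < 1 - w ^ 2 := by nlinarith
  have h5 : a ^ 2 ≤ w ^ 2 / (1 - w ^ 2) := by rw [le_div_iff₀ h4]; nlinarith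
  calc a = Real.sqrt (a ^ 2) := (Real.sqrt_sq ha).symm
    _ ≤ Real.sqrt (w ^ 2 / (1 - w ^ 2)) := Real.sqrt_le_sqrt h5
    _ = w / Real.sqrt (1 - w ^ 2) := by rw [Real.sqrt_div (sq_nonneg w), Real.sqrt_sq hw]


set_option maxHeartbeats 1000000 in
/-- for `b = 0` and fixed `r₀ > 0`, the derivative `Φ'(r₀; c, 0)` of the
translating profile tends to `∞` as the speed `c → ∞`. -/
theorem stmt1 (N : ℕ) (hN : 1 < N) (α : ℝ) (hα : 0 < α) (r₀ : ℝ) (hr₀ : 0 < r₀)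
    (P : ℝ → ℝ → ℝ)
    (hP : ∀ c : ℝ, 0 < c →
      ∃ φ φ'' : ℝ → ℝ, IsProfileSolOn N α 0 c (Set.Ici 0) φ (P c) φ'') :
    Filter.Tendsto (fun c : ℝ => P c r₀) Filter.atTop Filter.atTop := by
  obtain ⟨m, rfl⟩ : ∃ m, N = m + 2 := ⟨N - 2, by omega⟩
  have hαinv : (0:ℝ) < 1 / α := by positivity
  rw [tendsto_atTop]
  intro M0
  set M : ℝ := max M0 1 with hMdef
  have hM1 : (1:ℝ) ≤ M := le_max_right _ _
  have hMpos : (0:ℝ) < M := by linarith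
  -- constants
  set w₀ : ℝ := M / Real.sqrt (1 + M ^ 2) with hw₀def
  have hw₀pos : 0 < w₀ := by positivity
  have hw₀lt : w₀ < 1 := by
    rw [hw₀def, div_lt_one (by positivity)]
    rw [show M = Real.sqrt (M ^ 2) from (Real.sqrt_sq hMpos.le).symm]
    exact Real.sqrt_lt_sqrt (by positivity) (by nlinarith [Real.sq_sqrt (by positivity : (0:ℝ) ≤ M^2)])
  set w₁ : ℝ := (1 + w₀) / 2 with hw₁def
  have hw₁pos : 0 < w₁ := by rw [hw₁def]; linarith
  have hw₁lt : w₁ < 1 := by rw [hw₁def]; linarith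
  have hw₀w₁ : w₀ < w₁ := by rw [hw₁def]; linarith
  have hw₁sq : (0:ℝ) < 1 - w₁ ^ 2 := by nlinarith
  set M₁ : ℝ := w₁ / Real.sqrt (1 - w₁ ^ 2) with hM₁def
  have hM₁pos : 0 < M₁ := by positivity
  set Q₁ : ℝ := Real.sqrt (1 + M₁ ^ 2) ^ (1 / α) with hQ₁def
  have hQ₁pos : 0 < Q₁ := Real.rpow_pos_of_pos (Real.sqrt_pos.2 (by positivity)) _
  set ρ : ℝ := r₀ * (w₀ / w₁) ^ (((m:ℝ) + 1)⁻¹) with hρdef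
  have hwdiv : 0 < w₀ / w₁ := by positivity
  have hwdiv1 : w₀ / w₁ < 1 := (div_lt_one hw₁pos).2 hw₀w₁
  have hρpos : 0 < ρ := mul_pos hr₀ (Real.rpow_pos_of_pos hwdiv _)
  have hρlt : ρ < r₀ := by
    have := Real.rpow_lt_one hwdiv.le hwdiv1 (by positivity : (0:ℝ) < ((m:ℝ)+1)⁻¹)
    calc ρ < r₀ * 1 := by rw [hρdef]; exact mul_lt_mul_of_pos_left this hr₀
    _ = r₀ := mul_one r₀
  have hρpow : ρ ^ (m + 1) * w₁ = r₀ ^ (m + 1) * w₀ := by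
    have h1 : ((w₀ / w₁) ^ (((m:ℝ) + 1)⁻¹)) ^ (m + 1) = w₀ / w₁ := by
      rw [← Real.rpow_natCast ((w₀ / w₁) ^ (((m:ℝ) + 1)⁻¹)) (m + 1), ← Real.rpow_mul hwdiv.le]
      push_cast
      rw [inv_mul_cancel₀ (by positivity), Real.rpow_one]
    rw [hρdef, mul_pow, h1]
    field_simp
  set C₀ : ℝ := w₀ * r₀ ^ (m + 1) * Q₁ / (ρ ^ (m + 1) * (r₀ - ρ)) with hC₀def
  filter_upwards [eventually_gt_atTop (0:ℝ),
    (tendsto_rpow_atTop hαinv).eventually_gt_atTop C₀] with c hc0 hc1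
  refine le_trans (le_max_left M0 1) ?_
  by_contra hcon
  push_neg at hcon
  obtain ⟨φ, φ'', h00, hv0, hφd, hvd, hode⟩ := hP c hc0
  set v : ℝ → ℝ := P c with hvdef
  set A : ℝ := c ^ (1 / α) with hAdef
  have hApos : 0 < A := Real.rpow_pos_of_pos hc0 _
  set u : ℝ → ℝ := fun r => r ^ (m + 1) * (v r / Real.sqrt (1 + v r ^ 2)) with hudef
  -- derivative of u
  have hu : ∀ r : ℝ, 0 < r →
      HasDerivAt u (A * r ^ (m + 1) / Real.sqrt (1 + v r ^ 2) ^ (1 / α)) r := by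
    intro r hr
    have hvda : HasDerivAt v (φ'' r) r :=
      (hvd r (Set.mem_Ici.2 hr.le)).hasDerivAt (Ici_mem_nhds hr)
    have hpos : (0:ℝ) < 1 + v r ^ 2 := by positivity
    have h1 : HasDerivAt (fun x => 1 + v x ^ 2) (2 * v r ^ 1 * φ'' r) r :=
      ((hvda.pow 2).const_add 1)
    have h2 := h1.sqrt (ne_of_gt hpos)
    have hspos : 0 < Real.sqrt (1 + v r ^ 2) := Real.sqrt_pos.2 hpos
    have h3 := hvda.div h2 (ne_of_gt hspos)
    have h4 : HasDerivAt u _ r := (hasDerivAt_pow (m + 1) r).mul h3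
    convert h4 using 1
    set s : ℝ := Real.sqrt (1 + v r ^ 2) with hsdef
    set S : ℝ := s ^ (1 / α) with hSdef
    have hSpos : 0 < S := Real.rpow_pos_of_pos hspos _
    have hsq : s ^ 2 = 1 + v r ^ 2 := Real.sq_sqrt hpos.le
    have h := hode r (Set.mem_Ici.2 hr.le) (ne_of_gt hr)
    have hodd : oddPow (c / s - 0) (1 / α) = A / S := by
      rw [sub_zero]
      unfold oddPow
      rw [if_pos (by positivity)]
      exact Real.div_rpow hc0.le (Real.sqrt_nonneg _) _
    rw [hodd] at h
    have h2' : φ'' r / s ^ 2 = A * s / S - ((m:ℝ) + 1) * v r / r := by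
      rw [hsq]
      push_cast at h
      linear_combination h
    have hφ'' : φ'' r = (A * s / S - ((m:ℝ) + 1) * v r / r) * s ^ 2 :=
      (div_eq_iff (by positivity)).1 h2'
    rw [hφ'', Nat.add_sub_cancel]
    push_cast
    field_simp
    linear_combination (r*r^m*S*((m:ℝ)+1)*(v r) - A*r^2*r^m*s) * hsq
  -- continuity of u on [0, r₀]
  have hvc : ContinuousOn v (Set.Icc 0 r₀) := fun r hr =>
    ((hvd r hr.1).continuousWithinAt).mono (fun x hx => hx.1)
  have hucont : ContinuousOn u (Set.Icc 0 r₀) := by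
    apply ContinuousOn.mul (continuousOn_pow _)
    apply hvc.div ((continuousOn_const.add (hvc.pow 2)).sqrt)
    intro r hr
    exact ne_of_gt (Real.sqrt_pos.2 (by show (0:ℝ) < 1 + v r ^ 2; positivity))
  -- monotonicity of u
  have humono : MonotoneOn u (Set.Icc 0 r₀) := by
    apply monotoneOn_of_deriv_nonneg (convex_Icc _ _) hucont
    · intro x hx
      rw [interior_Icc] at hx
      exact (hu x hx.1).differentiableAt.differentiableWithinAt
    · intro x hx
      rw [interior_Icc] at hx
      rw [(hu x hx.1).deriv]
      have hden : 0 < Real.sqrt (1 + v x ^ 2) ^ (1 / α) :=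
        Real.rpow_pos_of_pos (Real.sqrt_pos.2 (by positivity)) _
      exact (div_pos (mul_pos hApos (pow_pos hx.1 _)) hden).le
  have hu0 : u 0 = 0 := by simp [hudef]
  -- v is nonnegative on (0, r₀]
  have hvnn : ∀ r, 0 < r → r ≤ r₀ → 0 ≤ v r := by
    intro r hr hrr
    have h1 : u 0 ≤ u r := humono (Set.left_mem_Icc.2 hr₀.le) ⟨hr.le, hrr⟩ hr.le
    rw [hu0] at h1
    have hspos : 0 < Real.sqrt (1 + v r ^ 2) := Real.sqrt_pos.2 (by positivity)
    have h2 : 0 ≤ v r / Real.sqrt (1 + v r ^ 2) := by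
      by_contra hneg
      push_neg at hneg
      have : u r < 0 := mul_neg_of_pos_of_neg (pow_pos hr _) hneg
      linarith
    have : v r = v r / Real.sqrt (1 + v r ^ 2) * Real.sqrt (1 + v r ^ 2) :=
      (div_mul_cancel₀ _ (ne_of_gt hspos)).symm
    rw [this]
    exact mul_nonneg h2 hspos.le
  -- bound at r₀ from hcon
  have hwr₀ : v r₀ / Real.sqrt (1 + v r₀ ^ 2) ≤ w₀ :=
    ratio_mono (hvnn r₀ hr₀ le_rfl) hcon.le
  have hur₀ : u r₀ ≤ w₀ * r₀ ^ (m + 1) := by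
    rw [hudef]
    calc r₀ ^ (m + 1) * (v r₀ / Real.sqrt (1 + v r₀ ^ 2)) ≤ r₀ ^ (m + 1) * w₀ :=
      mul_le_mul_of_nonneg_left hwr₀ (by positivity)
    _ = w₀ * r₀ ^ (m + 1) := mul_comm _ _
  -- on [ρ, r₀], v ≤ M₁ hence derivative of u is ≥ K
  set K : ℝ := A * ρ ^ (m + 1) / Q₁ with hKdef
  have hbound : ∀ x ∈ Set.Icc ρ r₀, K ≤ A * x ^ (m + 1) / Real.sqrt (1 + v x ^ 2) ^ (1 / α) := by
    intro x hx
    have hxpos : 0 < x := hρpos.trans_le hx.1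
    have hux : u x ≤ u r₀ := humono ⟨hxpos.le, hx.2⟩ (Set.right_mem_Icc.2 hr₀.le) hx.2
    have hwx : v x / Real.sqrt (1 + v x ^ 2) ≤ w₁ := by
      have h1 : x ^ (m + 1) * (v x / Real.sqrt (1 + v x ^ 2)) ≤ w₁ * ρ ^ (m + 1) := by
        calc x ^ (m + 1) * (v x / Real.sqrt (1 + v x ^ 2)) = u x := rfl
        _ ≤ u r₀ := hux
        _ ≤ w₀ * r₀ ^ (m + 1) := hur₀
        _ = w₁ * ρ ^ (m + 1) := by linarith [hρpow]
      have h2 : w₁ * ρ ^ (m + 1) ≤ w₁ * x ^ (m + 1) :=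
        mul_le_mul_of_nonneg_left (pow_le_pow_left₀ hρpos.le hx.1 _) hw₁pos.le
      have h3 := h1.trans h2
      rw [mul_comm (w₁) (x ^ (m + 1))] at h3
      exact le_of_mul_le_mul_left h3 (pow_pos hxpos _)
    have hvx : v x ≤ M₁ := from_ratio (hvnn x hxpos hx.2) hw₁pos.le hw₁lt hwx
    have hsx : Real.sqrt (1 + v x ^ 2) ^ (1 / α) ≤ Q₁ := by
      rw [hQ₁def]
      apply Real.rpow_le_rpow (Real.sqrt_nonneg _) _ hαinv.le
      exact Real.sqrt_le_sqrt (by nlinarith [hvnn x hxpos hx.2])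
    rw [hKdef]
    apply div_le_div₀ (by positivity)
      (mul_le_mul_of_nonneg_left (pow_le_pow_left₀ hρpos.le hx.1 _) hApos.le)
      (Real.rpow_pos_of_pos (Real.sqrt_pos.2 (by positivity)) _) hsx
  -- monotone comparison on [ρ, r₀]
  have hsub : Set.Icc ρ r₀ ⊆ Set.Icc 0 r₀ := Set.Icc_subset_Icc hρpos.le le_rfl
  have hgmono : MonotoneOn (fun r => u r - K * r) (Set.Icc ρ r₀) := by
    apply monotoneOn_of_deriv_nonneg (convex_Icc _ _)
      ((hucont.mono hsub).sub (continuousOn_const.mul continuousOn_id))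
    · intro x hx
      rw [interior_Icc] at hx
      exact (((hu x (hρpos.trans hx.1)).sub
        ((hasDerivAt_id x).const_mul K))).differentiableAt.differentiableWithinAt
    · intro x hx
      rw [interior_Icc] at hx
      rw [show deriv (u - (fun x => A * ρ ^ (m + 1) / Q₁) * id) x = _ from ((hu x (hρpos.trans hx.1)).sub ((hasDerivAt_id x).const_mul K)).deriv]
      have := hbound x ⟨hx.1.le, hx.2.le⟩
      simp only [mul_one]
      linarith
  have hfin : K * (r₀ - ρ) ≤ w₀ * r₀ ^ (m + 1) := by
    have h1 := hgmono (Set.left_mem_Icc.2 hρlt.le) (Set.right_mem_Icc.2 hρlt.le) hρlt.le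
    have h2 : (0:ℝ) ≤ u ρ := by
      have := humono (Set.left_mem_Icc.2 hr₀.le) ⟨hρpos.le, hρlt.le⟩ hρpos.le
      rw [hu0] at this; exact this
    simp only at h1
    nlinarith [hur₀]
  -- contradiction
  rw [hKdef, div_mul_eq_mul_div, div_le_iff₀ hQ₁pos] at hfin
  rw [hC₀def, div_lt_iff₀ (mul_pos (pow_pos hρpos _) (sub_pos.2 hρlt))] at hc1
  nlinarith
end

section
/- Let N > 1 be an integer and α > 0. For b ≤ 0 fixed and 0 < c₁ < c₂, one has Φ'(r; c₁, b) < Φ'(r; c₂, b) and Φ(r; c₁, b) < Φ(r; c₂, b) for every r > 0 lying in both maximal existence intervals; likewise, for c > 0 fixed and b₂ < b₁ ≤ 0, one has Φ'(r; c, b₁) < Φ'(r; c, b₂) and Φ(r; c, b₁) < Φ(r; c, b₂) for every r > 0 lying in both maximal existence intervals (i.e. Φ and Φ' are strictly increasing in c and in −b). -/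
open Set Filter Topology

/-! ### Auxiliary material -/

/-- The nonlinearity as a function of the slope `p`. -/
noncomputable def Gfun (α b c p : ℝ) : ℝ :=
  oddPow (c / Real.sqrt (1 + p ^ 2) - b) (1 / α) * Real.sqrt (1 + p ^ 2)

lemma sqrt_pos' (p : ℝ) : 0 < Real.sqrt (1 + p ^ 2) := by
  apply Real.sqrt_pos.mpr; positivity

lemma arg_pos {b c : ℝ} (hb : b ≤ 0) (hc : 0 < c) (p : ℝ) :
    0 < c / Real.sqrt (1 + p ^ 2) - b := by
  have h1 := sqrt_pos' p
  have h2 : 0 < c / Real.sqrt (1 + p ^ 2) := by positivity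
  linarith

lemma Gfun_eq {α b c : ℝ} (hb : b ≤ 0) (hc : 0 < c) (p : ℝ) :
    Gfun α b c p = (c / Real.sqrt (1 + p ^ 2) - b) ^ (1 / α) * Real.sqrt (1 + p ^ 2) := by
  rw [Gfun, oddPow, if_pos (arg_pos hb hc p).le]

lemma Gfun_zero {α b c : ℝ} (hb : b ≤ 0) (hc : 0 < c) :
    Gfun α b c 0 = (c - b) ^ (1 / α) := by
  rw [Gfun_eq hb hc]
  norm_num

lemma Gfun_continuousAt {α b c : ℝ} (hb : b ≤ 0) (hc : 0 < c) (p : ℝ) :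
    ContinuousAt (Gfun α b c) p := by
  have hfun : Gfun α b c = fun q =>
      (c / Real.sqrt (1 + q ^ 2) - b) ^ (1 / α) * Real.sqrt (1 + q ^ 2) :=
    funext (Gfun_eq hb hc)
  rw [hfun]
  have hs : Continuous fun q : ℝ => Real.sqrt (1 + q ^ 2) :=
    Real.continuous_sqrt.comp (by continuity)
  have hg : Continuous fun q : ℝ => c / Real.sqrt (1 + q ^ 2) - b :=
    (continuous_const.div hs fun q => (sqrt_pos' q).ne').sub continuous_const
  apply ContinuousAt.mul _ hs.continuousAt
  exact hg.continuousAt.rpow_const (Or.inl (arg_pos hb hc p).ne')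

lemma Gfun_lt_c {α b c₁ c₂ : ℝ} (hα : 0 < α) (hb : b ≤ 0) (hc₁ : 0 < c₁) (hc : c₁ < c₂)
    (p : ℝ) : Gfun α b c₁ p < Gfun α b c₂ p := by
  have hs := sqrt_pos' p
  rw [Gfun_eq hb hc₁, Gfun_eq hb (hc₁.trans hc)]
  apply mul_lt_mul_of_pos_right _ hs
  apply Real.rpow_lt_rpow (arg_pos hb hc₁ p).le _ (by positivity)
  have h : c₁ / Real.sqrt (1 + p ^ 2) < c₂ / Real.sqrt (1 + p ^ 2) := by gcongr
  linarith

lemma Gfun_lt_b {α b₁ b₂ c : ℝ} (hα : 0 < α) (hb : b₂ < b₁) (hb₁ : b₁ ≤ 0) (hc : 0 < c)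
    (p : ℝ) : Gfun α b₁ c p < Gfun α b₂ c p := by
  have hs := sqrt_pos' p
  rw [Gfun_eq hb₁ hc, Gfun_eq (le_of_lt (hb.trans_le hb₁)) hc]
  apply mul_lt_mul_of_pos_right _ hs
  apply Real.rpow_lt_rpow (arg_pos hb₁ hc p).le (by linarith) (by positivity)

lemma hasDerivAt_of_Ico {f f' : ℝ → ℝ} {R x : ℝ}
    (h : ∀ r ∈ Set.Ico 0 R, HasDerivWithinAt f (f' r) (Set.Ico 0 R) r)
    (hx : x ∈ Set.Ioo (0 : ℝ) R) : HasDerivAt f (f' x) x :=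
  (h x ⟨hx.1.le, hx.2⟩).hasDerivAt
    (Filter.mem_of_superset (Ioo_mem_nhds hx.1 hx.2) Set.Ioo_subset_Ico_self)

/-- The value of the ODE second derivative at a positive radius. -/
lemma ode_val {N : ℕ} {α b c R : ℝ} {φ φ' φ'' : ℝ → ℝ}
    (sol : IsProfileSolOn N α b c (Set.Ico 0 R) φ φ' φ'')
    {r : ℝ} (hr : r ∈ Set.Ioo (0 : ℝ) R) :
    φ'' r = (Gfun α b c (φ' r) - (((N : ℝ) - 1) / r) * φ' r) * (1 + φ' r ^ 2) := by
  have h := sol.2.2.2.2 r ⟨hr.1.le, hr.2⟩ hr.1.ne'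
  have hpos : (0 : ℝ) < 1 + φ' r ^ 2 := by positivity
  have h' : φ'' r / (1 + φ' r ^ 2) = Gfun α b c (φ' r) - (((N : ℝ) - 1) / r) * φ' r := by
    rw [Gfun]; linarith
  calc φ'' r = φ'' r / (1 + φ' r ^ 2) * (1 + φ' r ^ 2) :=
        (div_mul_cancel₀ _ hpos.ne').symm
    _ = _ := by rw [h']

/-- The key initial-value identity `N · φ''(0) = (c − b)^{1/α}`. -/
lemma second_deriv_zero {N : ℕ} {α b c R : ℝ} {φ φ' φ'' : ℝ → ℝ}
    (hα : 0 < α) (hb : b ≤ 0) (hc : 0 < c) (hR : 0 < R)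
    (sol : IsProfileSolOn N α b c (Set.Ico 0 R) φ φ' φ'') :
    (N : ℝ) * φ'' 0 = (c - b) ^ (1 / α) := by
  obtain ⟨hφ0, hφ'0, hdφ, hdφ', hode⟩ := sol
  set A := φ'' 0 with hA
  -- slope of φ' tends to A
  have hmem0 : (0 : ℝ) ∈ Set.Ico (0 : ℝ) R := ⟨le_refl _, hR⟩
  have hslope0 : Filter.Tendsto (slope φ' 0) (𝓝[Set.Ico 0 R \ {0}] 0) (𝓝 A) :=
    (hasDerivWithinAt_iff_tendsto_slope).mp (hdφ' 0 hmem0)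
  have hset : Set.Ico (0 : ℝ) R \ {0} = Set.Ioo 0 R := by
    ext x
    simp only [Set.mem_diff, Set.mem_Ico, Set.mem_singleton_iff, Set.mem_Ioo]
    constructor
    · rintro ⟨⟨h1, h2⟩, h3⟩; exact ⟨lt_of_le_of_ne h1 (Ne.symm h3), h2⟩
    · rintro ⟨h1, h2⟩; exact ⟨⟨h1.le, h2⟩, h1.ne'⟩
  have hnhds : 𝓝[Set.Ioo (0 : ℝ) R] (0 : ℝ) = 𝓝[>] (0 : ℝ) := by
    have : Set.Ioo (0 : ℝ) R = Set.Iio R ∩ Set.Ioi 0 := by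
      rw [Set.inter_comm, Set.Ioi_inter_Iio]
    rw [this]
    exact nhdsWithin_inter_of_mem
      (mem_nhdsWithin_of_mem_nhds (Iio_mem_nhds hR))
  have hslope : Filter.Tendsto (fun r => φ' r / r) (𝓝[>] (0 : ℝ)) (𝓝 A) := by
    have h1 : Filter.Tendsto (slope φ' 0) (𝓝[>] (0 : ℝ)) (𝓝 A) := by
      rwa [hset, hnhds] at hslope0
    refine h1.congr' ?_
    filter_upwards [self_mem_nhdsWithin] with r hr
    simp [slope, hφ'0, div_eq_inv_mul]
  -- φ' tends to 0
  have hφ'cont : Filter.Tendsto φ' (𝓝[>] (0 : ℝ)) (𝓝 0) := by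
    have h1 : ContinuousWithinAt φ' (Set.Ico 0 R) 0 := (hdφ' 0 hmem0).continuousWithinAt
    have h2 : Filter.Tendsto φ' (𝓝[Set.Ico 0 R] (0 : ℝ)) (𝓝 0) := by
      simpa [ContinuousWithinAt, hφ'0] using h1
    refine h2.mono_left ?_
    rw [← hnhds]
    exact nhdsWithin_mono _ Set.Ioo_subset_Ico_self
  -- limit of φ''
  set L : ℝ := (c - b) ^ (1 / α) - ((N : ℝ) - 1) * A with hL
  have hφ''lim : Filter.Tendsto φ'' (𝓝[>] (0 : ℝ)) (𝓝 L) := by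
    have heq : ∀ᶠ r in 𝓝[>] (0 : ℝ),
        (Gfun α b c (φ' r) - ((N : ℝ) - 1) * (φ' r / r)) * (1 + φ' r ^ 2) = φ'' r := by
      filter_upwards [Ioo_mem_nhdsGT_of_mem (Set.left_mem_Ico.mpr hR)] with r hr
      rw [ode_val ⟨hφ0, hφ'0, hdφ, hdφ', hode⟩ hr]
      have hrne : r ≠ 0 := hr.1.ne'
      field_simp
    refine Filter.Tendsto.congr' heq ?_
    have hG : Filter.Tendsto (fun r => Gfun α b c (φ' r)) (𝓝[>] (0 : ℝ))
        (𝓝 ((c - b) ^ (1 / α))) := by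
      have := (Gfun_continuousAt (α := α) hb hc 0).tendsto.comp hφ'cont
      rwa [Gfun_zero hb hc] at this
    have hsq : Filter.Tendsto (fun r => 1 + φ' r ^ 2) (𝓝[>] (0 : ℝ)) (𝓝 1) := by
      have : Filter.Tendsto (fun r => 1 + φ' r ^ 2) (𝓝[>] (0 : ℝ)) (𝓝 (1 + 0 ^ 2)) :=
        (tendsto_const_nhds.add ((hφ'cont.pow 2)))
      simpa using this
    have h := ((hG.sub (hslope.const_mul ((N : ℝ) - 1))).mul hsq)
    simpa [hL] using h
  -- mean value theorem transfer
  have hslope' : Filter.Tendsto (fun r => φ' r / r) (𝓝[>] (0 : ℝ)) (𝓝 L) := by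
    rw [Metric.tendsto_nhdsWithin_nhds] at hφ''lim ⊢
    intro ε hε
    obtain ⟨δ, hδ, hδ'⟩ := hφ''lim ε hε
    refine ⟨min δ R, lt_min hδ hR, ?_⟩
    intro x hx hxd
    have hx0 : 0 < x := hx
    have hxδ : x < min δ R := by
      rwa [Real.dist_eq, sub_zero, abs_of_pos hx0] at hxd
    have hxR : x < R := hxδ.trans_le (min_le_right _ _)
    have hxδ' : x < δ := hxδ.trans_le (min_le_left _ _)
    have hsub : Set.Icc (0 : ℝ) x ⊆ Set.Ico 0 R := fun y hy =>
      ⟨hy.1, lt_of_le_of_lt hy.2 hxR⟩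
    have hcont : ContinuousOn φ' (Set.Icc 0 x) := fun y hy =>
      ((hdφ' y (hsub hy)).continuousWithinAt).mono hsub
    have hderiv : ∀ y ∈ Set.Ioo (0 : ℝ) x, HasDerivAt φ' (φ'' y) y := fun y hy =>
      hasDerivAt_of_Ico hdφ' ⟨hy.1, hy.2.trans hxR⟩
    obtain ⟨ξ, hξ, hξval⟩ := exists_hasDerivAt_eq_slope φ' φ'' hx0 hcont hderiv
    have : φ'' ξ = φ' x / x := by rw [hξval, hφ'0, sub_zero, sub_zero]
    rw [show φ' x / x = φ'' ξ from this.symm]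
    exact hδ' hξ.1 (by rw [Real.dist_eq, sub_zero, abs_of_pos hξ.1]; exact hξ.2.trans hxδ')
  have hAL : A = L := tendsto_nhds_unique hslope hslope'
  rw [hL] at hAL
  linarith [hAL]

/-- Main comparison lemma, for two nonlinearities with a pointwise strict inequality. -/
lemma key_comparison {N : ℕ} {α b₁ c₁ b₂ c₂ R₁ R₂ : ℝ}
    {φ₁ φ₁' φ₁'' φ₂ φ₂' φ₂'' : ℝ → ℝ}
    (hα : 0 < α) (hb₁ : b₁ ≤ 0) (hc₁ : 0 < c₁) (hb₂ : b₂ ≤ 0) (hc₂ : 0 < c₂)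
    (hG : ∀ p, Gfun α b₁ c₁ p < Gfun α b₂ c₂ p)
    (hR₁ : 0 < R₁) (sol₁ : IsProfileSolOn N α b₁ c₁ (Set.Ico 0 R₁) φ₁ φ₁' φ₁'')
    (hR₂ : 0 < R₂) (sol₂ : IsProfileSolOn N α b₂ c₂ (Set.Ico 0 R₂) φ₂ φ₂' φ₂'') :
    ∀ r : ℝ, 0 < r → r < R₁ → r < R₂ → φ₁' r < φ₂' r ∧ φ₁ r < φ₂ r := by
  have hA : (N : ℝ) * φ₁'' 0 < (N : ℝ) * φ₂'' 0 := by
    rw [second_deriv_zero hα hb₁ hc₁ hR₁ sol₁, second_deriv_zero hα hb₂ hc₂ hR₂ sol₂]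
    have := hG 0
    rwa [Gfun_zero hb₁ hc₁, Gfun_zero hb₂ hc₂] at this
  have hNpos : (0 : ℝ) < N := by
    by_contra h
    push_neg at h
    have hN0 : (N : ℝ) = 0 := le_antisymm h (Nat.cast_nonneg N)
    rw [hN0] at hA; simp at hA
  have hA' : φ₁'' 0 < φ₂'' 0 := lt_of_mul_lt_mul_left (by linarith [hA]) hNpos.le
  set w : ℝ → ℝ := fun r => φ₂' r - φ₁' r with hw
  -- slope limits at 0
  have slope_lim : ∀ {R : ℝ} {b c : ℝ} {φ φ' φ'' : ℝ → ℝ}, 0 < R →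
      IsProfileSolOn N α b c (Set.Ico 0 R) φ φ' φ'' →
      Filter.Tendsto (fun r => φ' r / r) (𝓝[>] (0 : ℝ)) (𝓝 (φ'' 0)) := by
    intro R b c φ φ' φ'' hR sol
    have hmem0 : (0 : ℝ) ∈ Set.Ico (0 : ℝ) R := ⟨le_refl _, hR⟩
    have hslope0 : Filter.Tendsto (slope φ' 0) (𝓝[Set.Ico 0 R \ {0}] 0) (𝓝 (φ'' 0)) :=
      (hasDerivWithinAt_iff_tendsto_slope).mp (sol.2.2.2.1 0 hmem0)
    have hset : Set.Ico (0 : ℝ) R \ {0} = Set.Ioo 0 R := by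
      ext x
      simp only [Set.mem_diff, Set.mem_Ico, Set.mem_singleton_iff, Set.mem_Ioo]
      constructor
      · rintro ⟨⟨h1, h2⟩, h3⟩; exact ⟨lt_of_le_of_ne h1 (Ne.symm h3), h2⟩
      · rintro ⟨h1, h2⟩; exact ⟨⟨h1.le, h2⟩, h1.ne'⟩
    have hnhds : 𝓝[Set.Ioo (0 : ℝ) R] (0 : ℝ) = 𝓝[>] (0 : ℝ) := by
      have : Set.Ioo (0 : ℝ) R = Set.Iio R ∩ Set.Ioi 0 := by
        rw [Set.inter_comm, Set.Ioi_inter_Iio]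
      rw [this]
      exact nhdsWithin_inter_of_mem (mem_nhdsWithin_of_mem_nhds (Iio_mem_nhds hR))
    have h1 : Filter.Tendsto (slope φ' 0) (𝓝[>] (0 : ℝ)) (𝓝 (φ'' 0)) := by
      rwa [hset, hnhds] at hslope0
    refine h1.congr' ?_
    filter_upwards [self_mem_nhdsWithin] with r hr
    simp [slope, sol.2.1, div_eq_inv_mul]
  -- strict positivity of w on the common interval
  have claim1 : ∀ ρ : ℝ, 0 < ρ → ρ < R₁ → ρ < R₂ → 0 < w ρ := by
    by_contra hcon
    push_neg at hcon
    obtain ⟨ρ, hρ0, hρ1, hρ2, hρw⟩ := hcon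
    set B : Set ℝ := {r | r ∈ Set.Ioc 0 ρ ∧ w r ≤ 0} with hB
    have hBne : B.Nonempty := ⟨ρ, ⟨hρ0, le_refl _⟩, hρw⟩
    have hBbdd : BddBelow B := ⟨0, fun x hx => hx.1.1.le⟩
    set r₀ : ℝ := sInf B with hr₀
    have hr₀0 : 0 ≤ r₀ := le_csInf hBne fun x hx => hx.1.1.le
    have hr₀ρ : r₀ ≤ ρ := csInf_le hBbdd ⟨⟨hρ0, le_refl _⟩, hρw⟩
    -- continuity of w on [0, ρ]
    have hsub₁ : Set.Icc (0 : ℝ) ρ ⊆ Set.Ico 0 R₁ := fun y hy => ⟨hy.1, hy.2.trans_lt hρ1⟩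
    have hsub₂ : Set.Icc (0 : ℝ) ρ ⊆ Set.Ico 0 R₂ := fun y hy => ⟨hy.1, hy.2.trans_lt hρ2⟩
    have hwcont : ContinuousOn w (Set.Icc 0 ρ) := by
      apply ContinuousOn.sub
      · exact fun y hy => ((sol₂.2.2.2.1 y (hsub₂ hy)).continuousWithinAt).mono hsub₂
      · exact fun y hy => ((sol₁.2.2.2.1 y (hsub₁ hy)).continuousWithinAt).mono hsub₁
    have hZclosed : IsClosed {r | r ∈ Set.Icc (0 : ℝ) ρ ∧ w r ≤ 0} := by
      have heq : {r | r ∈ Set.Icc (0 : ℝ) ρ ∧ w r ≤ 0}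
          = Set.Icc (0 : ℝ) ρ ∩ w ⁻¹' Set.Iic 0 := rfl
      rw [heq]
      exact hwcont.preimage_isClosed_of_isClosed isClosed_Icc isClosed_Iic
    have hr₀mem : r₀ ∈ Set.Icc (0 : ℝ) ρ ∧ w r₀ ≤ 0 := by
      have h1 : r₀ ∈ closure B := csInf_mem_closure hBne hBbdd
      have h2 : closure B ⊆ {r | r ∈ Set.Icc (0 : ℝ) ρ ∧ w r ≤ 0} := by
        apply closure_minimal _ hZclosed
        rintro x ⟨hx1, hx2⟩
        exact ⟨⟨hx1.1.le, hx1.2⟩, hx2⟩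
      exact h2 h1
    rcases eq_or_lt_of_le hr₀0 with h0 | h0
    · -- r₀ = 0 : use the initial comparison of second derivatives
      have hwlim : Filter.Tendsto (fun r => w r / r) (𝓝[>] (0 : ℝ))
          (𝓝 (φ₂'' 0 - φ₁'' 0)) := by
        have h1 := slope_lim hR₁ sol₁
        have h2 := slope_lim hR₂ sol₂
        have := h2.sub h1
        refine this.congr fun r => ?_
        simp [hw, sub_div]
      have hev : ∀ᶠ r in 𝓝[>] (0 : ℝ), 0 < w r / r := by
        have : 0 < φ₂'' 0 - φ₁'' 0 := by linarith
        exact hwlim.eventually (eventually_gt_nhds this) |>.mono fun r hr => hr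
      have hev' : ∀ᶠ r in 𝓝[>] (0 : ℝ), 0 < w r := by
        filter_upwards [hev, self_mem_nhdsWithin] with r hr hr'
        have hr0 : 0 < r := hr'
        have h1 : w r / r * r = w r := div_mul_cancel₀ _ hr0.ne'
        have h2 : 0 < w r / r * r := mul_pos hr hr0
        rw [h1] at h2
        exact h2
      have hfreq : ∃ᶠ r in 𝓝[>] (0 : ℝ), r ∈ B := by
        rw [Filter.frequently_iff]
        intro U hU
        obtain ⟨δ, hδ, hδU⟩ := mem_nhdsGT_iff_exists_Ioo_subset.mp hU
        have hlt : sInf B < δ := by rw [← hr₀, ← h0]; exact hδ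
        obtain ⟨x, hxB, hxδ⟩ := exists_lt_of_csInf_lt hBne hlt
        exact ⟨x, hδU ⟨hxB.1.1, hxδ⟩, hxB⟩
      obtain ⟨x, hx1, hx2⟩ := (hev'.and_frequently hfreq).exists
      exact absurd hx2.2 (not_le.mpr hx1)
    · -- r₀ > 0 : contradiction at the first touching point
      have hfirst : ∀ s : ℝ, 0 < s → s < r₀ → 0 < w s := by
        intro s hs0 hsr
        by_contra hws
        push_neg at hws
        have : s ∈ B := ⟨⟨hs0, hsr.le.trans hr₀ρ⟩, hws⟩
        exact absurd (csInf_le hBbdd this) (not_le.mpr hsr)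
      -- w r₀ = 0
      have hwr₀0 : w r₀ = 0 := by
        refine le_antisymm hr₀mem.2 ?_
        have hcw : Filter.Tendsto w (𝓝[<] r₀) (𝓝 (w r₀)) := by
          have h1 : ContinuousWithinAt w (Set.Icc 0 ρ) r₀ := hwcont r₀ hr₀mem.1
          refine h1.tendsto.mono_left ?_
          have hIoo : Set.Ioo (0 : ℝ) r₀ ⊆ Set.Icc 0 ρ := fun y hy =>
            ⟨hy.1.le, hy.2.le.trans hr₀ρ⟩
          calc 𝓝[<] r₀ = 𝓝[Set.Ioo (0 : ℝ) r₀] r₀ := by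
                have : Set.Ioo (0 : ℝ) r₀ = Set.Ioi 0 ∩ Set.Iio r₀ := (Set.Ioi_inter_Iio).symm
                rw [this, nhdsWithin_inter_of_mem (mem_nhdsWithin_of_mem_nhds (Ioi_mem_nhds h0))]
            _ ≤ 𝓝[Set.Icc (0 : ℝ) ρ] r₀ := nhdsWithin_mono _ hIoo
        refine ge_of_tendsto hcw ?_
        filter_upwards [Ioo_mem_nhdsLT_of_mem (Set.mem_Ioc.mpr ⟨h0, le_refl r₀⟩)] with s hs
        exact (hfirst s hs.1 hs.2).le
      have hr₀R₁ : r₀ < R₁ := lt_of_le_of_lt hr₀ρ hρ1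
      have hr₀R₂ : r₀ < R₂ := lt_of_le_of_lt hr₀ρ hρ2
      have hd1 : HasDerivAt φ₁' (φ₁'' r₀) r₀ := hasDerivAt_of_Ico sol₁.2.2.2.1 ⟨h0, hr₀R₁⟩
      have hd2 : HasDerivAt φ₂' (φ₂'' r₀) r₀ := hasDerivAt_of_Ico sol₂.2.2.2.1 ⟨h0, hr₀R₂⟩
      have hdw : HasDerivAt w (φ₂'' r₀ - φ₁'' r₀) r₀ := hd2.sub hd1
      have hp : φ₂' r₀ = φ₁' r₀ := by
        have : w r₀ = φ₂' r₀ - φ₁' r₀ := rfl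
        linarith [hwr₀0, this]
      have hdiffpos : 0 < φ₂'' r₀ - φ₁'' r₀ := by
        rw [ode_val sol₁ ⟨h0, hr₀R₁⟩, ode_val sol₂ ⟨h0, hr₀R₂⟩, hp]
        have hGlt := hG (φ₁' r₀)
        have hpos : (0 : ℝ) < 1 + φ₁' r₀ ^ 2 := by positivity
        nlinarith [hGlt, hpos]
      -- left slope nonpositive
      have hdw_nonpos : φ₂'' r₀ - φ₁'' r₀ ≤ 0 := by
        have hts : Filter.Tendsto (slope w r₀) (𝓝[≠] r₀) (𝓝 (φ₂'' r₀ - φ₁'' r₀)) :=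
          hasDerivAt_iff_tendsto_slope.mp hdw
        have hts' : Filter.Tendsto (slope w r₀) (𝓝[<] r₀) (𝓝 (φ₂'' r₀ - φ₁'' r₀)) :=
          hts.mono_left (nhdsWithin_mono _ fun x hx => ne_of_lt hx)
        refine le_of_tendsto hts' ?_
        filter_upwards [Ioo_mem_nhdsLT_of_mem (Set.mem_Ioc.mpr ⟨h0, le_refl r₀⟩)] with s hs
        have hws : 0 < w s := hfirst s hs.1 hs.2
        have hneg : s - r₀ < 0 := by linarith [hs.2]
        have : slope w r₀ s = w s / (s - r₀) := by
          simp [slope, hwr₀0, div_eq_inv_mul]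
        rw [this]
        exact le_of_lt (div_neg_of_pos_of_neg hws hneg)
      linarith
  -- conclusion
  intro r hr0 hr1 hr2
  refine ⟨by have := claim1 r hr0 hr1 hr2; simpa [hw] using this, ?_⟩
  set u : ℝ → ℝ := fun s => φ₂ s - φ₁ s with hu
  have hsub₁ : Set.Icc (0 : ℝ) r ⊆ Set.Ico 0 R₁ := fun y hy => ⟨hy.1, hy.2.trans_lt hr1⟩
  have hsub₂ : Set.Icc (0 : ℝ) r ⊆ Set.Ico 0 R₂ := fun y hy => ⟨hy.1, hy.2.trans_lt hr2⟩
  have hucont : ContinuousOn u (Set.Icc 0 r) := by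
    apply ContinuousOn.sub
    · exact fun y hy => ((sol₂.2.2.1 y (hsub₂ hy)).continuousWithinAt).mono hsub₂
    · exact fun y hy => ((sol₁.2.2.1 y (hsub₁ hy)).continuousWithinAt).mono hsub₁
  have hmono : StrictMonoOn u (Set.Icc 0 r) := by
    apply strictMonoOn_of_deriv_pos (convex_Icc 0 r) hucont
    intro x hx
    rw [interior_Icc] at hx
    have hd1 : HasDerivAt φ₁ (φ₁' x) x := hasDerivAt_of_Ico sol₁.2.2.1 ⟨hx.1, hx.2.trans hr1⟩
    have hd2 : HasDerivAt φ₂ (φ₂' x) x := hasDerivAt_of_Ico sol₂.2.2.1 ⟨hx.1, hx.2.trans hr2⟩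
    have hdu : HasDerivAt u (φ₂' x - φ₁' x) x := hd2.sub hd1
    rw [hdu.deriv]
    have := claim1 x hx.1 (hx.2.trans hr1) (hx.2.trans hr2)
    simpa [hw] using this
  have h0r : (0 : ℝ) ∈ Set.Icc (0 : ℝ) r := ⟨le_refl _, hr0.le⟩
  have hrr : r ∈ Set.Icc (0 : ℝ) r := ⟨hr0.le, le_refl _⟩
  have := hmono h0r hrr hr0
  have hu0 : u 0 = 0 := by simp [hu, sol₁.1, sol₂.1]
  rw [hu0] at this
  simpa [hu] using this

/-- for `b ≤ 0`, both `Φ(r; c, b)` and `Φ'(r; c, b)` are strictly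
increasing in `c` and in `−b`, at every `r > 0` in both maximal existence intervals. -/
theorem stmt5 (N : ℕ) (hN : 1 < N) (α : ℝ) (hα : 0 < α) :
    (∀ (b c₁ c₂ R₁ R₂ : ℝ) (φ₁ φ₁' φ₁'' φ₂ φ₂' φ₂'' : ℝ → ℝ),
      b ≤ 0 → 0 < c₁ → c₁ < c₂ →
      IsMaxProfileSol N α b c₁ R₁ φ₁ φ₁' φ₁'' →
      IsMaxProfileSol N α b c₂ R₂ φ₂ φ₂' φ₂'' →
      ∀ r : ℝ, 0 < r → r < R₁ → r < R₂ → φ₁' r < φ₂' r ∧ φ₁ r < φ₂ r) ∧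
    (∀ (c b₁ b₂ R₁ R₂ : ℝ) (φ₁ φ₁' φ₁'' φ₂ φ₂' φ₂'' : ℝ → ℝ),
      0 < c → b₂ < b₁ → b₁ ≤ 0 →
      IsMaxProfileSol N α b₁ c R₁ φ₁ φ₁' φ₁'' →
      IsMaxProfileSol N α b₂ c R₂ φ₂ φ₂' φ₂'' →
      ∀ r : ℝ, 0 < r → r < R₁ → r < R₂ → φ₁' r < φ₂' r ∧ φ₁ r < φ₂ r) := by
  constructor
  · intro b c₁ c₂ R₁ R₂ φ₁ φ₁' φ₁'' φ₂ φ₂' φ₂'' hb hc₁ hc sol₁ sol₂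
    exact key_comparison hα hb hc₁ hb (hc₁.trans hc)
      (Gfun_lt_c hα hb hc₁ hc) sol₁.1 sol₁.2.1 sol₂.1 sol₂.2.1
  · intro c b₁ b₂ R₁ R₂ φ₁ φ₁' φ₁'' φ₂ φ₂' φ₂'' hc hb hb₁ sol₁ sol₂
    exact key_comparison hα hb₁ hc (le_of_lt (hb.trans_le hb₁)) hc
      (Gfun_lt_b hα hb hb₁ hc) sol₁.1 sol₁.2.1 sol₂.1 sol₂.2.1
end

section
/- Let N > 1 be an integer, 0 < α ≤ 1 and c > b > 0, and set Ψ₀ := √(c²−b²)/b. Then the translating profile Φ(·; c, b) (defined on [0, ∞)) satisfies |Φ(r) − Ψ₀·r| → ∞ as r → ∞; in fact Ψ₀·r − Φ(r) → ∞ as r → ∞. -/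
open Set Filter Topology

set_option maxHeartbeats 1000000



lemma no_crossing (u d : ℝ → ℝ)
    (hu : ∀ r ∈ Ici (0:ℝ), HasDerivWithinAt u (d r) (Ici 0) r)
    (B : ℝ → ℝ) (r₁ : ℝ) (hr₁ : 0 ≤ r₁)
    (hBmono : MonotoneOn B (Ici r₁)) (hBcont : ContinuousOn B (Ici r₁))
    (hinit : u r₁ < B r₁)
    (hder : ∀ r, r₁ < r → u r = B r → d r < 0) :
    ∀ r, r₁ ≤ r → u r < B r := by
  have hucont : ContinuousOn u (Ici 0) := fun r hr => (hu r hr).continuousWithinAt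
  by_contra hcon
  push_neg at hcon
  obtain ⟨r₂, hr₂, hBle⟩ := hcon
  have hIccsub : Icc r₁ r₂ ⊆ Ici (0:ℝ) := fun x hx => le_trans hr₁ hx.1
  have hIccsub' : Icc r₁ r₂ ⊆ Ici r₁ := fun x hx => hx.1
  set S : Set ℝ := {r ∈ Icc r₁ r₂ | B r ≤ u r} with hS
  have hSclosed : IsClosed S :=
    isClosed_Icc.isClosed_le (hBcont.mono hIccsub') (hucont.mono hIccsub)
  have hSne : S.Nonempty := ⟨r₂, ⟨hr₂, le_rfl⟩, hBle⟩
  have hSbdd : BddBelow S := ⟨r₁, fun x hx => hx.1.1⟩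
  set r₀ := sInf S with hr₀def
  have hr₀S : r₀ ∈ S := hSclosed.csInf_mem hSne hSbdd
  have hr₀Icc : r₀ ∈ Icc r₁ r₂ := hr₀S.1
  have hne : r₀ ≠ r₁ := by
    intro h
    have := hr₀S.2
    rw [h] at this
    exact absurd this (not_le.mpr hinit)
  have hr₁lt : r₁ < r₀ := lt_of_le_of_ne hr₀Icc.1 (Ne.symm hne)
  have hbefore : ∀ s, r₁ ≤ s → s < r₀ → u s < B s := by
    intro s hs hslt
    by_contra h
    push_neg at h
    have hsS : s ∈ S := ⟨⟨hs, hslt.le.trans hr₀Icc.2⟩, h⟩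
    exact absurd (csInf_le hSbdd hsS) (not_le.mpr hslt)
  -- u r₀ ≤ B r₀ by continuity from the left
  have hNeBot : (𝓝[Ioo r₁ r₀] r₀).NeBot := right_nhdsWithin_Ioo_neBot hr₁lt
  have hle : u r₀ ≤ B r₀ := by
    have hsub1 : Ioo r₁ r₀ ⊆ Ici (0:ℝ) := fun x hx => le_trans hr₁ hx.1.le
    have hsub2 : Ioo r₁ r₀ ⊆ Ici r₁ := fun x hx => hx.1.le
    have htu : Tendsto u (𝓝[Ioo r₁ r₀] r₀) (𝓝 (u r₀)) :=
      ((hucont r₀ (hIccsub hr₀Icc)).mono hsub1).tendsto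
    have htB : Tendsto B (𝓝[Ioo r₁ r₀] r₀) (𝓝 (B r₀)) :=
      ((hBcont r₀ (le_of_lt hr₁lt)).mono hsub2).tendsto
    refine le_of_tendsto_of_tendsto htu htB ?_
    filter_upwards [self_mem_nhdsWithin] with s hs
    exact (hbefore s hs.1.le hs.2).le
  have heq : u r₀ = B r₀ := le_antisymm hle hr₀S.2
  have hdneg : d r₀ < 0 := hder r₀ hr₁lt heq
  -- but the derivative must be ≥ 0 since u s < u r₀ for s to the left
  have hslope : Tendsto (slope u r₀) (𝓝[Ici 0 \ {r₀}] r₀) (𝓝 (d r₀)) :=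
    hasDerivWithinAt_iff_tendsto_slope.mp (hu r₀ (hIccsub hr₀Icc))
  have hslope' : Tendsto (slope u r₀) (𝓝[Ioo r₁ r₀] r₀) (𝓝 (d r₀)) :=
    hslope.mono_left (nhdsWithin_mono _ (fun x hx => ⟨le_trans hr₁ hx.1.le, ne_of_lt hx.2⟩))
  have hdge : 0 ≤ d r₀ := by
    refine ge_of_tendsto hslope' ?_
    filter_upwards [self_mem_nhdsWithin] with s hs
    have h1 : u s < u r₀ := by
      have h0 := hbefore s hs.1.le hs.2
      have h2 : B s ≤ B r₀ := hBmono hs.1.le (le_of_lt hr₁lt) hs.2.le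
      linarith
    have h3 : s - r₀ < 0 := sub_neg.mpr hs.2
    have : slope u r₀ s = (u s - u r₀) / (s - r₀) := by
      rw [slope_def_field]
    rw [this]
    have : (u s - u r₀) / (s - r₀) = (u r₀ - u s) / (r₀ - s) := by
      rw [← neg_div_neg_eq]; ring_nf
    rw [this]
    apply div_nonneg <;> linarith
  linarith


lemma sqrt_facts (b c u : ℝ) (hb : 0 < b) (hc : b < c) (hu0 : 0 ≤ u)
    (huΨ : u ≤ Real.sqrt (c^2-b^2)/b) :
    Real.sqrt (1+u^2) ≤ c/b ∧
    c / Real.sqrt (1+u^2) - b ≤ b * (Real.sqrt (c^2-b^2)/b - u) ∧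
    (u < Real.sqrt (c^2-b^2)/b → 0 < c / Real.sqrt (1+u^2) - b) := by
  set Ψ := Real.sqrt (c^2-b^2)/b with hΨ
  set s := Real.sqrt (1+u^2) with hs
  have hcb : 0 < c := lt_trans hb hc
  have hsq : Real.sqrt (c^2-b^2)^2 = c^2-b^2 := Real.sq_sqrt (by nlinarith)
  have key : b^2*(1+Ψ^2) = c^2 := by
    rw [hΨ]; field_simp; linarith
  have hssq : s^2 = 1+u^2 := Real.sq_sqrt (by positivity)
  have hs0 : 0 ≤ s := Real.sqrt_nonneg _
  have hΨ0 : 0 ≤ Ψ := le_trans hu0 huΨ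
  have hcbsq : (c/b)^2 = 1 + Ψ^2 := by
    field_simp at key ⊢; linarith
  have hscb : Real.sqrt (1+Ψ^2) = c/b := by
    rw [← hcbsq]; exact Real.sqrt_sq (by positivity)
  have hsle : s ≤ c/b := by
    rw [hs, ← hscb]; exact Real.sqrt_le_sqrt (by nlinarith)
  have hsltcb : u < Ψ → s < c/b := by
    intro hlt
    rw [hs, ← hscb]
    exact Real.sqrt_lt_sqrt (by positivity) (by nlinarith)
  clear_value s Ψ
  clear hs hΨ hscb hsq
  have hs1 : 1 ≤ s := by nlinarith
  have hsu : u ≤ s := by nlinarith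
  have hΨs : Ψ ≤ c/b := by
    by_contra h
    push_neg at h
    nlinarith [div_pos hcb hb]
  have hspos : 0 < s := lt_of_lt_of_le one_pos hs1
  refine ⟨hsle, ?_, ?_⟩
  · -- c/s - b ≤ b*(Ψ-u)
    have hkey2 : c/b - s ≤ Ψ - u := by
      have h1 : (c/b - s)*(c/b + s) = Ψ^2 - u^2 := by nlinarith
      nlinarith [mul_pos hb hspos]
    have h2 : c - b*s ≤ b*(Ψ-u) := by
      have := mul_le_mul_of_nonneg_left hkey2 hb.le
      calc c - b*s = b*(c/b - s) := by field_simp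
        _ ≤ b*(Ψ-u) := this
    have h3 : b*(Ψ-u) ≤ b*(Ψ-u)*s :=
      le_mul_of_one_le_right (by nlinarith) hs1
    rw [sub_le_iff_le_add, div_le_iff₀ hspos]
    nlinarith
  · intro hlt
    have hslt : s < c/b := hsltcb hlt
    have hbs : b*s < c := by
      have h4 : b*s < b*(c/b) := mul_lt_mul_of_pos_left hslt hb
      have h5 : b*(c/b) = c := mul_div_cancel₀ c hb.ne'
      linarith
    rw [sub_pos, lt_div_iff₀ hspos]
    linarith


/-- for `0 < α ≤ 1` and `c > b > 0`, with `Ψ₀ = √(c²−b²)/b`, the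
translating profile satisfies `|Φ(r) − Ψ₀ r| → ∞`; in fact `Ψ₀ r − Φ(r) → ∞`. -/
theorem stmt9 (N : ℕ) (hN : 1 < N) (α b c : ℝ) (hα0 : 0 < α) (hα1 : α ≤ 1)
    (hb : 0 < b) (hc : b < c) (φ φ' φ'' : ℝ → ℝ)
    (hφ : IsProfileSolOn N α b c (Set.Ici 0) φ φ' φ'') :
    Filter.Tendsto (fun r : ℝ => |φ r - Real.sqrt (c ^ 2 - b ^ 2) / b * r|)
      Filter.atTop Filter.atTop ∧
    Filter.Tendsto (fun r : ℝ => Real.sqrt (c ^ 2 - b ^ 2) / b * r - φ r)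
      Filter.atTop Filter.atTop := by
  obtain ⟨hφ0, hφ'0, hd1, hd2, hode⟩ := hφ
  set Ψ := Real.sqrt (c^2 - b^2) / b with hΨdef
  have hcb : 0 < c := lt_trans hb hc
  have hΨpos : 0 < Ψ := by
    rw [hΨdef]
    apply div_pos _ hb
    apply Real.sqrt_pos.mpr
    nlinarith
  -- rearranged ODE
  have hφ''eq : ∀ r : ℝ, 0 < r →
      φ'' r = (1 + φ' r ^ 2) *
        (oddPow (c / Real.sqrt (1 + φ' r ^ 2) - b) (1 / α) * Real.sqrt (1 + φ' r ^ 2)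
          - (((N : ℝ) - 1) / r) * φ' r) := by
    intro r hr
    have h := hode r (le_of_lt hr) (ne_of_gt hr)
    have hpos : (0:ℝ) < 1 + φ' r ^ 2 := by positivity
    field_simp at h ⊢
    linarith
  -- Step A : φ' < Ψ
  have hscb : Real.sqrt (1 + Ψ^2) = c/b := by
    have hsq : Real.sqrt (c^2-b^2)^2 = c^2-b^2 := Real.sq_sqrt (by nlinarith)
    have : 1 + Ψ^2 = (c/b)^2 := by
      rw [hΨdef]; field_simp; linarith
    rw [this]; exact Real.sqrt_sq (by positivity)
  have hN2 : (2:ℝ) ≤ (N:ℝ) := by exact_mod_cast hN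
  have stepA : ∀ r, 0 ≤ r → φ' r < Ψ := by
    have := no_crossing φ' φ'' hd2 (fun _ => Ψ) 0 le_rfl
      (monotoneOn_const) continuousOn_const (by rw [hφ'0]; exact hΨpos) ?_
    · exact fun r hr => this r hr
    · intro r hr heq
      have hval : c / Real.sqrt (1 + φ' r ^ 2) - b = 0 := by
        rw [heq, hscb]
        field_simp
        ring
      have hzero : oddPow (c / Real.sqrt (1 + φ' r ^ 2) - b) (1/α) = 0 := by
        rw [hval]
        simp only [oddPow, if_pos (le_refl (0:ℝ))]
        exact Real.zero_rpow (by positivity)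
      rw [hφ''eq r hr, hzero, heq]
      have h1 : (0:ℝ) < 1 + Ψ^2 := by positivity
      have h2 : 0 < (((N:ℝ)-1)/r) * Ψ := by
        apply mul_pos (div_pos (by linarith) hr) hΨpos
      nlinarith
  -- Step B : barrier
  have hN1 : (0:ℝ) < (N:ℝ)-1 := by linarith
  set x := ((N:ℝ)-1)*Ψ*b/(4*c) with hxdef
  have hxpos : 0 < x := by rw [hxdef]; positivity
  have hφ'1 : φ' 1 < Ψ := stepA 1 zero_le_one
  set M := min (min (Ψ/2) (x^α/b)) ((Ψ - φ' 1)/2) with hMdef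
  have hM0 : 0 < M := lt_min (lt_min (by positivity) (by positivity)) (by linarith)
  have hM1 : M ≤ Ψ/2 := le_trans (min_le_left _ _) (min_le_left _ _)
  have hM2 : b*M ≤ x^α := by
    have h : M ≤ x^α/b := le_trans (min_le_left _ _) (min_le_right _ _)
    calc b*M = M*b := mul_comm _ _
      _ ≤ (x^α/b)*b := mul_le_mul_of_nonneg_right h hb.le
      _ = x^α := by field_simp
  have hM3 : M ≤ (Ψ - φ' 1)/2 := min_le_right _ _
  have hxM : (b*M)^((1:ℝ)/α) ≤ x := by
    have h1 : (b*M)^((1:ℝ)/α) ≤ (x^α)^((1:ℝ)/α) :=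
      Real.rpow_le_rpow (by positivity) hM2 (by positivity)
    have h2 : (x^α)^((1:ℝ)/α) = x := by
      rw [← Real.rpow_mul hxpos.le, mul_one_div_cancel hα0.ne', Real.rpow_one]
    linarith
  have stepB : ∀ r, 1 ≤ r → φ' r < Ψ - M/r := by
    apply no_crossing φ' φ'' hd2 (fun r => Ψ - M/r) 1 zero_le_one
    · intro p hp q hq hpq
      simp only
      have hp0 : (0:ℝ) < p := lt_of_lt_of_le one_pos hp
      have : M/q ≤ M/p := div_le_div_of_nonneg_left hM0.le hp0 hpq
      linarith
    · apply ContinuousOn.sub continuousOn_const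
      exact continuousOn_const.div continuousOn_id
        (fun y hy => ne_of_gt (lt_of_lt_of_le one_pos hy))
    · simp only [div_one]
      linarith
    · intro r hr heq
      have hr0 : (0:ℝ) < r := lt_trans one_pos hr
      have hδpos : 0 < M/r := div_pos hM0 hr0
      have hδle : M/r ≤ M := by
        rw [div_le_iff₀ hr0]; nlinarith
      have hu0 : 0 ≤ φ' r := by rw [heq]; linarith
      have huΨ : φ' r ≤ Ψ := by rw [heq]; linarith
      have huΨlt : φ' r < Ψ := by rw [heq]; linarith
      have huhalf : Ψ/2 ≤ φ' r := by rw [heq]; linarith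
      obtain ⟨hsle, hcsb, hcpos⟩ := sqrt_facts b c (φ' r) hb hc hu0 huΨ
      have hcposs : 0 < c / Real.sqrt (1 + φ' r^2) - b := hcpos huΨlt
      have hΨu : Ψ - φ' r = M/r := by rw [heq]; ring
      have hfb : oddPow (c / Real.sqrt (1 + φ' r^2) - b) (1/α) ≤ x/r := by
        rw [oddPow, if_pos hcposs.le]
        have h1 : (c / Real.sqrt (1 + φ' r^2) - b) ^ ((1:ℝ)/α) ≤ (b*(M/r)) ^ ((1:ℝ)/α) := by
          apply Real.rpow_le_rpow hcposs.le _ (by positivity)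
          rw [← hΨu]; exact hcsb
        have h3 : (b*(M/r))^((1:ℝ)/α) = (b*M)^((1:ℝ)/α) * (1/r)^((1:ℝ)/α) := by
          rw [← Real.mul_rpow (by positivity) (by positivity)]
          ring_nf
        have h4 : (1/r)^((1:ℝ)/α) ≤ 1/r := by
          have := Real.rpow_le_rpow_of_exponent_ge (by positivity : (0:ℝ) < 1/r)
            (by rw [div_le_one hr0]; linarith : 1/r ≤ 1)
            (by rw [le_div_iff₀ hα0]; linarith : 1 ≤ (1:ℝ)/α)
          rwa [Real.rpow_one] at this
        have h5 : (b*M)^((1:ℝ)/α) * (1/r)^((1:ℝ)/α) ≤ x * (1/r) :=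
          mul_le_mul hxM h4 (by positivity) hxpos.le
        calc (c / Real.sqrt (1 + φ' r^2) - b) ^ ((1:ℝ)/α)
            ≤ (b*(M/r)) ^ ((1:ℝ)/α) := h1
          _ = (b*M)^((1:ℝ)/α) * (1/r)^((1:ℝ)/α) := h3
          _ ≤ x * (1/r) := h5
          _ = x/r := by ring
      rw [hφ''eq r hr0]
      apply mul_neg_of_pos_of_neg (by positivity)
      have hfs : oddPow (c / Real.sqrt (1 + φ' r^2) - b) (1/α) * Real.sqrt (1 + φ' r^2)
          ≤ (x/r) * (c/b) :=
        mul_le_mul hfb hsle (Real.sqrt_nonneg _) (by positivity)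
      have hxc : (x/r)*(c/b) = ((N:ℝ)-1)*Ψ/(4*r) := by
        rw [hxdef]; field_simp
      have hterm : (((N:ℝ)-1)/r)*(Ψ/2) ≤ (((N:ℝ)-1)/r)*(φ' r) :=
        mul_le_mul_of_nonneg_left huhalf (by positivity)
      have hterm2 : (((N:ℝ)-1)/r)*(Ψ/2) = ((N:ℝ)-1)*Ψ/(2*r) := by
        field_simp
      have h2r : ((N:ℝ)-1)*Ψ/(4*r) < ((N:ℝ)-1)*Ψ/(2*r) := by
        rw [div_lt_div_iff₀ (by positivity) (by positivity)]
        nlinarith [mul_pos (mul_pos hN1 hΨpos) hr0]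
      linarith
  -- Step C : integral estimate
  have hcont' : ContinuousOn φ' (Ici 0) := fun t ht => (hd2 t ht).continuousWithinAt
  have key : ∀ r, 1 ≤ r → (Ψ*1 - φ 1) + M * Real.log r ≤ Ψ * r - φ r := by
    intro r hr
    have hsub : Icc (1:ℝ) r ⊆ Ici (0:ℝ) := fun t ht => le_trans zero_le_one ht.1
    have hftc : ∫ t in (1:ℝ)..r, φ' t = φ r - φ 1 := by
      apply intervalIntegral.integral_eq_sub_of_hasDeriv_right_of_le hr
      · exact fun t ht => ((hd1 t (hsub ht)).continuousWithinAt).mono hsub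
      · intro t ht
        exact (hd1 t (le_trans zero_le_one ht.1.le)).mono
          (fun y hy => le_trans (le_trans zero_le_one ht.1.le) (le_of_lt hy))
      · exact (hcont'.mono hsub).intervalIntegrable_of_Icc hr
    have hint1 : IntervalIntegrable φ' MeasureTheory.volume 1 r :=
      (hcont'.mono hsub).intervalIntegrable_of_Icc hr
    have hgcont : ContinuousOn (fun t => Ψ - M/t) (Icc 1 r) :=
      continuousOn_const.sub (continuousOn_const.div continuousOn_id
        (fun y hy => ne_of_gt (lt_of_lt_of_le one_pos hy.1)))
    have hint2 : IntervalIntegrable (fun t => Ψ - M/t) MeasureTheory.volume 1 r :=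
      hgcont.intervalIntegrable_of_Icc hr
    have hmono : ∫ t in (1:ℝ)..r, φ' t ≤ ∫ t in (1:ℝ)..r, (Ψ - M/t) := by
      apply intervalIntegral.integral_mono_on hr hint1 hint2
      exact fun t ht => (stepB t ht.1).le
    have hintM : IntervalIntegrable (fun t => M/t) MeasureTheory.volume 1 r := by
      apply ContinuousOn.intervalIntegrable_of_Icc hr
      exact continuousOn_const.div continuousOn_id
        (fun y hy => ne_of_gt (lt_of_lt_of_le one_pos hy.1))
    have hMt : ∫ t in (1:ℝ)..r, M/t = M * Real.log r := by
      have h0 : (0:ℝ) ∉ Set.uIcc 1 r := by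
        rw [Set.uIcc_of_le hr]
        intro h
        have := h.1
        norm_num at this
      have heq1 : ∀ t : ℝ, M/t = M * (1/t) := fun t => by ring
      simp_rw [heq1]
      rw [intervalIntegral.integral_const_mul, integral_one_div h0, div_one]
    have hlog : ∫ t in (1:ℝ)..r, (Ψ - M/t) = Ψ*(r-1) - M * Real.log r := by
      rw [intervalIntegral.integral_sub intervalIntegrable_const hintM,
        intervalIntegral.integral_const, hMt, smul_eq_mul]
      ring
    rw [hftc] at hmono
    rw [hlog] at hmono
    linarith
  have htend : Tendsto (fun r => (Ψ*1 - φ 1) + M * Real.log r) atTop atTop :=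
    tendsto_atTop_add_const_left _ _ (Real.tendsto_log_atTop.const_mul_atTop hM0)
  have hmain : Tendsto (fun r => Ψ * r - φ r) atTop atTop := by
    apply tendsto_atTop_mono' atTop _ htend
    filter_upwards [eventually_ge_atTop 1] with r hr using key r hr
  refine ⟨?_, hmain⟩
  apply tendsto_atTop_mono _ hmain
  intro r
  have := neg_le_abs (φ r - Ψ * r)
  have h2 : -(φ r - Ψ * r) = Ψ * r - φ r := by ring
  linarith
end
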